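/- In a finitely-branching stochastic game with reachability objective and target set T, if for every target vertex t∈T the only outgoing edge is a self-loop t→t, then for every good vertex u (one satisfying: for all π there exists σ with P_u^{σ,π}(Reach(T)) ≥ val(u)) that belongs to player Box, there exists an optimal edge u → u' (meaning val(u') = val(u)) such that u' is also good. -/

import Mathlib

open scoped Classical

/-- A stochastic game: a directed graph with a total edge relation, vertices
partitioned among player Box, player Diamond and probabilistic vertices,
the latter carrying a positive probability distribution on outgoing edges. -/
structure SGame (V : Type*) where
  edge : V → V → Prop
  total : ∀ v, ∃ u, edge v u
  isBox : V → Prop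
  isDiamond : V → Prop
  isCirc : V → Prop
  cover : ∀ v, isBox v ∨ isDiamond v ∨ isCirc v
  disjBD : ∀ v, ¬ (isBox v ∧ isDiamond v)
  disjBC : ∀ v, ¬ (isBox v ∧ isCirc v)
  disjDC : ∀ v, ¬ (isDiamond v ∧ isCirc v)
  prob : V → V → ℝ
  prob_nonneg : ∀ v u, 0 ≤ prob v u
  prob_supp : ∀ v u, isCirc v → (0 < prob v u ↔ edge v u)
  prob_sum : ∀ v, isCirc v → ∑' u, prob v u = 1

/-- A history-dependent randomized strategy for the player owning the vertices
satisfying `own`: it assigns to every history `w` and current vertex `v` owned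
by the player a probability distribution on the outgoing edges of `v`. -/
structure SGame.Strat {V : Type*} (G : SGame V) (own : V → Prop) where
  f : List V → V → V → ℝ
  nonneg : ∀ w v u, 0 ≤ f w v u
  supp : ∀ w v u, own v → f w v u ≠ 0 → G.edge v u
  sum_one : ∀ w v, own v → ∑' u, f w v u = 1

/-- One-step transition probability of the play `G(σ,π)` given history `w`. -/
noncomputable def SGame.step {V : Type*} (G : SGame V) (σ : G.Strat G.isBox)
    (π : G.Strat G.isDiamond) (w : List V) (v u : V) : ℝ :=
  if G.isBox v then σ.f w v u else if G.isDiamond v then π.f w v u else G.prob v u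

/-- Probability of reaching the target set `T` from `v` within at most `n`
transitions in the play `G(σ,π)`, given that history `w` has elapsed. -/
noncomputable def SGame.reachN {V : Type*} (G : SGame V) (σ : G.Strat G.isBox)
    (π : G.Strat G.isDiamond) (T : Set V) : ℕ → List V → V → ℝ
  | 0, _, v => if v ∈ T then 1 else 0
  | n+1, w, v => if v ∈ T then 1 else
      ∑' u, G.step σ π w v u * SGame.reachN G σ π T n (w ++ [v]) u

/-- Probability `P_v^{σ,π}(Reach(T))` of reaching `T` from `v` in the play `G(σ,π)`. -/
noncomputable def SGame.reachP {V : Type*} (G : SGame V) (σ : G.Strat G.isBox)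
    (π : G.Strat G.isDiamond) (T : Set V) (v : V) : ℝ :=
  ⨆ n, G.reachN σ π T n [] v

/-- The (lower) value `sup_σ inf_π P_v^{σ,π}(Reach(T))` of vertex `v`. -/
noncomputable def SGame.val {V : Type*} (G : SGame V) (T : Set V) (v : V) : ℝ :=
  ⨆ σ : G.Strat G.isBox, ⨅ π : G.Strat G.isDiamond, G.reachP σ π T v

/-- The Bellman operator on functions `V → [0,1]`. -/
noncomputable def SGame.bellman {V : Type*} (G : SGame V) (T : Set V)
    (f : V → ℝ) : V → ℝ := fun v =>
  if v ∈ T then 1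
  else if G.isBox v then sSup (f '' {u | G.edge v u})
  else if G.isDiamond v then sInf (f '' {u | G.edge v u})
  else ∑' u, G.prob v u * f u


/-! ### Auxiliary development -/

namespace SGame

variable {V : Type*}

/-- A default successor of each vertex. -/
noncomputable def nxt (G : SGame V) (v : V) : V := (G.total v).choose

lemma nxt_edge (G : SGame V) (v : V) : G.edge v (G.nxt v) := (G.total v).choose_spec

/-- The deterministic strategy following a choice function `c`. -/
noncomputable def detStrat (G : SGame V) (own : V → Prop) (c : V → V)
    (hc : ∀ v, G.edge v (c v)) : G.Strat own where
  f := fun _ v u => if u = c v then (1:ℝ) else 0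
  nonneg := by intro w v u; split <;> norm_num
  supp := by
    intro w v u _ h
    by_cases hu : u = c v
    · subst hu; exact hc v
    · simp [hu] at h
  sum_one := by intro w v _; exact tsum_ite_eq (c v) 1

noncomputable instance stratNonempty (G : SGame V) (own : V → Prop) :
    Nonempty (G.Strat own) := ⟨G.detStrat own G.nxt G.nxt_edge⟩

section Basic

variable (G : SGame V) (T : Set V)

lemma step_nonneg (σ : G.Strat G.isBox) (π : G.Strat G.isDiamond) (w : List V) (v u : V) :
    0 ≤ G.step σ π w v u := by
  unfold SGame.step; split_ifs
  exacts [σ.nonneg w v u, π.nonneg w v u, G.prob_nonneg v u]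

lemma step_eq_zero (σ : G.Strat G.isBox) (π : G.Strat G.isDiamond) (w : List V) {v u : V}
    (h : ¬ G.edge v u) : G.step σ π w v u = 0 := by
  unfold SGame.step; split_ifs with h1 h2
  · by_contra h'; exact h (σ.supp w v u h1 h')
  · by_contra h'; exact h (π.supp w v u h2 h')
  · rcases G.cover v with hb | hd | hc
    · exact absurd hb h1
    · exact absurd hd h2
    · by_contra h'
      exact h ((G.prob_supp v u hc).mp
        (lt_of_le_of_ne (G.prob_nonneg v u) (Ne.symm h')))

lemma step_tsum_one (σ : G.Strat G.isBox) (π : G.Strat G.isDiamond) (w : List V) (v : V) :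
    ∑' u, G.step σ π w v u = 1 := by
  unfold SGame.step
  rcases G.cover v with hb | hd | hc
  · simp only [if_pos hb]; exact σ.sum_one w v hb
  · have hnb : ¬ G.isBox v := fun hb => G.disjBD v ⟨hb, hd⟩
    simp only [if_neg hnb, if_pos hd]; exact π.sum_one w v hd
  · have hnb : ¬ G.isBox v := fun hb => G.disjBC v ⟨hb, hc⟩
    have hnd : ¬ G.isDiamond v := fun hd => G.disjDC v ⟨hd, hc⟩
    simp only [if_neg hnb, if_neg hnd]; exact G.prob_sum v hc

lemma mem_succs (hfb : ∀ v, {u | G.edge v u}.Finite) {v u : V} : u ∈ (hfb v).toFinset ↔ G.edge v u := Set.Finite.mem_toFinset _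

lemma succs_nonempty (hfb : ∀ v, {u | G.edge v u}.Finite) (v : V) : ((hfb v).toFinset).Nonempty :=
  ⟨G.nxt v, (mem_succs G hfb).mpr (G.nxt_edge v)⟩

lemma step_sum (hfb : ∀ v, {u | G.edge v u}.Finite) (σ : G.Strat G.isBox) (π : G.Strat G.isDiamond) (w : List V) (v : V) :
    ∑ u ∈ (hfb v).toFinset, G.step σ π w v u = 1 := by
  rw [← tsum_eq_sum (L := SummationFilter.unconditional _) (fun u hu => G.step_eq_zero σ π w
    (fun he => hu ((mem_succs G hfb).mpr he)))]
  exact G.step_tsum_one σ π w v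

lemma reachN_zero (σ : G.Strat G.isBox) (π : G.Strat G.isDiamond) (w : List V) (v : V) :
    G.reachN σ π T 0 w v = if v ∈ T then 1 else 0 := rfl

lemma reachN_succ (σ : G.Strat G.isBox) (π : G.Strat G.isDiamond) (n : ℕ) (w : List V) (v : V) :
    G.reachN σ π T (n+1) w v = if v ∈ T then 1 else
      ∑' u, G.step σ π w v u * G.reachN σ π T n (w ++ [v]) u := rfl

lemma reachN_nonneg (σ : G.Strat G.isBox) (π : G.Strat G.isDiamond) :
    ∀ (n : ℕ) (w : List V) (v : V), 0 ≤ G.reachN σ π T n w v := by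
  intro n
  induction n with
  | zero => intro w v; rw [reachN_zero]; split <;> norm_num
  | succ n ih =>
    intro w v
    rw [reachN_succ]
    split
    · norm_num
    · exact tsum_nonneg fun u => mul_nonneg (G.step_nonneg σ π w v u) (ih _ u)

lemma reachN_sum (hfb : ∀ v, {u | G.edge v u}.Finite) (σ : G.Strat G.isBox) (π : G.Strat G.isDiamond) (n : ℕ) (w : List V) {v : V}
    (hv : v ∉ T) :
    G.reachN σ π T (n+1) w v =
      ∑ u ∈ (hfb v).toFinset, G.step σ π w v u * G.reachN σ π T n (w ++ [v]) u := by
  rw [reachN_succ, if_neg hv]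
  exact tsum_eq_sum fun u hu => by
    rw [G.step_eq_zero σ π w (fun he => hu ((mem_succs G hfb).mpr he)), zero_mul]

lemma reachN_le_one (hfb : ∀ v, {u | G.edge v u}.Finite) (σ : G.Strat G.isBox) (π : G.Strat G.isDiamond) :
    ∀ (n : ℕ) (w : List V) (v : V), G.reachN σ π T n w v ≤ 1 := by
  intro n
  induction n with
  | zero => intro w v; rw [reachN_zero]; split <;> norm_num
  | succ n ih =>
    intro w v
    by_cases hv : v ∈ T
    · rw [reachN_succ, if_pos hv]
    · rw [reachN_sum G T hfb σ π n w hv]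
      calc ∑ u ∈ (hfb v).toFinset, G.step σ π w v u * G.reachN σ π T n (w ++ [v]) u
          ≤ ∑ u ∈ (hfb v).toFinset, G.step σ π w v u :=
            Finset.sum_le_sum fun u _ =>
              mul_le_of_le_one_right (G.step_nonneg σ π w v u) (ih _ u)
        _ = 1 := G.step_sum hfb σ π w v

lemma reachN_bddAbove (hfb : ∀ v, {u | G.edge v u}.Finite) (σ : G.Strat G.isBox) (π : G.Strat G.isDiamond) (v : V) :
    BddAbove (Set.range fun n => G.reachN σ π T n [] v) := by
  refine ⟨1, ?_⟩
  rintro x ⟨n, rfl⟩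
  exact G.reachN_le_one T hfb σ π n [] v

lemma reachN_le_reachP (hfb : ∀ v, {u | G.edge v u}.Finite) (σ : G.Strat G.isBox) (π : G.Strat G.isDiamond) (n : ℕ) (v : V) :
    G.reachN σ π T n [] v ≤ G.reachP σ π T v :=
  le_ciSup (G.reachN_bddAbove T hfb σ π v) n

lemma reachP_nonneg (hfb : ∀ v, {u | G.edge v u}.Finite) (σ : G.Strat G.isBox) (π : G.Strat G.isDiamond) (v : V) :
    0 ≤ G.reachP σ π T v := by
  refine le_trans ?_ (G.reachN_le_reachP T hfb σ π 0 v)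
  exact G.reachN_nonneg T σ π 0 [] v

lemma reachP_le_one (hfb : ∀ v, {u | G.edge v u}.Finite) (σ : G.Strat G.isBox) (π : G.Strat G.isDiamond) (v : V) :
    G.reachP σ π T v ≤ 1 :=
  ciSup_le fun n => G.reachN_le_one T hfb σ π n [] v

lemma iInf_reachP_bddBelow (hfb : ∀ v, {u | G.edge v u}.Finite) (σ : G.Strat G.isBox) (v : V) :
    BddBelow (Set.range fun π : G.Strat G.isDiamond => G.reachP σ π T v) := by
  refine ⟨0, ?_⟩
  rintro x ⟨π, rfl⟩
  exact G.reachP_nonneg T hfb σ π v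

lemma iSup_iInf_bddAbove (hfb : ∀ v, {u | G.edge v u}.Finite) (v : V) :
    BddAbove (Set.range fun σ : G.Strat G.isBox =>
      ⨅ π : G.Strat G.isDiamond, G.reachP σ π T v) := by
  refine ⟨1, ?_⟩
  rintro x ⟨σ, rfl⟩
  exact ciInf_le_of_le (G.iInf_reachP_bddBelow T hfb σ v) (Classical.arbitrary _)
    (G.reachP_le_one T hfb σ _ v)

lemma val_nonneg (hfb : ∀ v, {u | G.edge v u}.Finite) (v : V) : 0 ≤ G.val T v := by
  refine le_trans ?_ (le_ciSup (G.iSup_iInf_bddAbove T hfb v) (Classical.arbitrary _))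
  exact le_ciInf fun π => G.reachP_nonneg T hfb _ π v

lemma val_le_one (hfb : ∀ v, {u | G.edge v u}.Finite) (v : V) : G.val T v ≤ 1 :=
  ciSup_le fun σ => ciInf_le_of_le (G.iInf_reachP_bddBelow T hfb σ v)
    (Classical.arbitrary _) (G.reachP_le_one T hfb σ _ v)

end Basic

/-! ### Exchange lemmas for suprema over finite sets -/

section Exchange

variable {α : Type*}

lemma sup'_iSup (s : Finset α) (hs : s.Nonempty) (f : α → ℕ → ℝ) (hb : ∀ x n, f x n ≤ 1) :
    s.sup' hs (fun x => ⨆ n, f x n) = ⨆ n, s.sup' hs (fun x => f x n) := by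
  have bdd : ∀ x, BddAbove (Set.range (f x)) := fun x =>
    ⟨1, by rintro y ⟨n, rfl⟩; exact hb x n⟩
  have bdd2 : BddAbove (Set.range fun n => s.sup' hs (fun x => f x n)) :=
    ⟨1, by rintro y ⟨n, rfl⟩; exact Finset.sup'_le _ _ fun x _ => hb x n⟩
  apply le_antisymm
  · refine Finset.sup'_le _ _ fun x hx => ciSup_le fun n => ?_
    exact le_trans (Finset.le_sup' (fun x => f x n) hx) (le_ciSup bdd2 n)
  · exact ciSup_le fun n => Finset.sup'_le _ _ fun x hx =>
      le_trans (le_ciSup (bdd x) n) (Finset.le_sup' (fun x => ⨆ n, f x n) hx)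

lemma inf'_iSup (s : Finset α) (hs : s.Nonempty) (f : α → ℕ → ℝ)
    (hmono : ∀ x, Monotone (f x)) (hb : ∀ x n, f x n ≤ 1) :
    s.inf' hs (fun x => ⨆ n, f x n) = ⨆ n, s.inf' hs (fun x => f x n) := by
  classical
  have bdd : ∀ x, BddAbove (Set.range (f x)) := fun x =>
    ⟨1, by rintro y ⟨n, rfl⟩; exact hb x n⟩
  have bdd2 : BddAbove (Set.range fun n => s.inf' hs (fun x => f x n)) :=
    ⟨1, by rintro y ⟨n, rfl⟩; exact le_trans (Finset.inf'_le _ hs.choose_spec) (hb _ n)⟩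
  apply le_antisymm
  · choose g hg hg2 using fun n => Finset.exists_mem_eq_inf' hs (fun x => f x n)
    obtain ⟨⟨x, hxs⟩, hx⟩ :=
      Finite.exists_infinite_fiber (fun n => (⟨g n, hg n⟩ : {y // y ∈ s}))
    have hxset : {n : ℕ | g n = x}.Infinite := by
      have h2 : ((fun n => (⟨g n, hg n⟩ : {y // y ∈ s})) ⁻¹' {⟨x, hxs⟩}).Infinite :=
        Set.infinite_coe_iff.mp hx
      have he : ((fun n => (⟨g n, hg n⟩ : {y // y ∈ s})) ⁻¹' {⟨x, hxs⟩}) = {n | g n = x} := by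
        ext n; simp [Subtype.ext_iff]
      rwa [he] at h2
    refine le_trans (Finset.inf'_le _ hxs) (ciSup_le fun m => ?_)
    obtain ⟨n, hn, hmn⟩ := hxset.exists_gt m
    have h3 : f x m ≤ f (g n) n := by rw [hn]; exact hmono x hmn.le
    exact le_trans h3 (le_trans (hg2 n).ge (le_ciSup bdd2 n))
  · refine ciSup_le fun n => Finset.le_inf' _ _ fun x hx =>
      le_trans (Finset.inf'_le (fun x => f x n) hx) (le_ciSup (bdd x) n)

open Filter in
lemma sum_iSup (s : Finset α) (c : α → ℝ) (hc : ∀ x, 0 ≤ c x) (f : α → ℕ → ℝ)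
    (hmono : ∀ x, Monotone (f x)) (hb : ∀ x n, f x n ≤ 1) :
    ∑ x ∈ s, c x * ⨆ n, f x n = ⨆ n, ∑ x ∈ s, c x * f x n := by
  have bdd : ∀ x, BddAbove (Set.range (f x)) := fun x =>
    ⟨1, by rintro y ⟨n, rfl⟩; exact hb x n⟩
  have h1 : Tendsto (fun n => ∑ x ∈ s, c x * f x n) atTop
      (nhds (∑ x ∈ s, c x * ⨆ n, f x n)) :=
    tendsto_finset_sum s fun x _ =>
      ((tendsto_atTop_ciSup (hmono x) (bdd x)).const_mul (c x))
  have hmono2 : Monotone (fun n => ∑ x ∈ s, c x * f x n) := fun m n h =>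
    Finset.sum_le_sum fun x _ => mul_le_mul_of_nonneg_left (hmono x h) (hc x)
  have bdd2 : BddAbove (Set.range fun n => ∑ x ∈ s, c x * f x n) :=
    ⟨∑ x ∈ s, c x, by
      rintro y ⟨n, rfl⟩
      exact Finset.sum_le_sum fun x _ => mul_le_of_le_one_right (hc x) (hb x n)⟩
  exact tendsto_nhds_unique h1 (tendsto_atTop_ciSup hmono2 bdd2)

end Exchange

/-! ### The Bellman iteration and its limit -/

section Bellman

variable (G : SGame V) (T : Set V)

lemma bellman_target {f : V → ℝ} {v : V} (hv : v ∈ T) : G.bellman T f v = 1 := if_pos hv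

lemma prob_eq_zero {v u : V} (hc : G.isCirc v) (h : ¬ G.edge v u) : G.prob v u = 0 := by
  by_contra h'
  exact h ((G.prob_supp v u hc).mp (lt_of_le_of_ne (G.prob_nonneg v u) (Ne.symm h')))

lemma prob_sumF (hfb : ∀ v, {u | G.edge v u}.Finite) {v : V} (hc : G.isCirc v) :
    ∑ u ∈ (hfb v).toFinset, G.prob v u = 1 := by
  rw [← tsum_eq_sum (L := SummationFilter.unconditional _) (fun u hu => G.prob_eq_zero hc (fun he => hu ((mem_succs G hfb).mpr he)))]
  exact G.prob_sum v hc

lemma bellman_box (hfb : ∀ v, {u | G.edge v u}.Finite) {f : V → ℝ} {v : V}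
    (hv : v ∉ T) (hb : G.isBox v) :
    G.bellman T f v = ((hfb v).toFinset).sup' (G.succs_nonempty hfb v) f := by
  unfold SGame.bellman
  rw [if_neg hv, if_pos hb, Finset.sup'_eq_csSup_image, Set.Finite.coe_toFinset]

lemma bellman_dia (hfb : ∀ v, {u | G.edge v u}.Finite) {f : V → ℝ} {v : V}
    (hv : v ∉ T) (hd : G.isDiamond v) :
    G.bellman T f v = ((hfb v).toFinset).inf' (G.succs_nonempty hfb v) f := by
  unfold SGame.bellman
  rw [if_neg hv, if_neg (fun hb => G.disjBD v ⟨hb, hd⟩), if_pos hd,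
    Finset.inf'_eq_csInf_image, Set.Finite.coe_toFinset]

lemma bellman_circ (hfb : ∀ v, {u | G.edge v u}.Finite) {f : V → ℝ} {v : V}
    (hv : v ∉ T) (hc : G.isCirc v) :
    G.bellman T f v = ∑ u ∈ (hfb v).toFinset, G.prob v u * f u := by
  unfold SGame.bellman
  rw [if_neg hv, if_neg (fun hb => G.disjBC v ⟨hb, hc⟩),
    if_neg (fun hd => G.disjDC v ⟨hd, hc⟩)]
  exact tsum_eq_sum fun u hu => by
    rw [G.prob_eq_zero hc (fun he => hu ((mem_succs G hfb).mpr he)), zero_mul]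

lemma bellman_nonneg (hfb : ∀ v, {u | G.edge v u}.Finite) {f : V → ℝ}
    (h0 : ∀ v, 0 ≤ f v) (v : V) : 0 ≤ G.bellman T f v := by
  by_cases hv : v ∈ T
  · rw [G.bellman_target T hv]; norm_num
  rcases G.cover v with hb | hd | hc
  · rw [G.bellman_box T hfb hv hb]
    exact le_trans (h0 _) (Finset.le_sup' f ((mem_succs G hfb).mpr (G.nxt_edge v)))
  · rw [G.bellman_dia T hfb hv hd]
    exact Finset.le_inf' _ _ fun x _ => h0 x
  · rw [G.bellman_circ T hfb hv hc]
    exact Finset.sum_nonneg fun x _ => mul_nonneg (G.prob_nonneg v x) (h0 x)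

lemma bellman_le_one (hfb : ∀ v, {u | G.edge v u}.Finite) {f : V → ℝ}
    (h1 : ∀ v, f v ≤ 1) (v : V) : G.bellman T f v ≤ 1 := by
  by_cases hv : v ∈ T
  · rw [G.bellman_target T hv]
  rcases G.cover v with hb | hd | hc
  · rw [G.bellman_box T hfb hv hb]
    exact Finset.sup'_le _ _ fun x _ => h1 x
  · rw [G.bellman_dia T hfb hv hd]
    exact le_trans (Finset.inf'_le f ((mem_succs G hfb).mpr (G.nxt_edge v))) (h1 _)
  · rw [G.bellman_circ T hfb hv hc]
    calc ∑ u ∈ (hfb v).toFinset, G.prob v u * f u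
        ≤ ∑ u ∈ (hfb v).toFinset, G.prob v u :=
          Finset.sum_le_sum fun x _ => mul_le_of_le_one_right (G.prob_nonneg v x) (h1 x)
      _ = 1 := G.prob_sumF hfb hc

lemma bellman_mono (hfb : ∀ v, {u | G.edge v u}.Finite) {f g : V → ℝ}
    (h : ∀ v, f v ≤ g v) (v : V) : G.bellman T f v ≤ G.bellman T g v := by
  by_cases hv : v ∈ T
  · rw [G.bellman_target T hv, G.bellman_target T hv]
  rcases G.cover v with hb | hd | hc
  · rw [G.bellman_box T hfb hv hb, G.bellman_box T hfb hv hb]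
    exact Finset.sup'_mono_fun fun x _ => h x
  · rw [G.bellman_dia T hfb hv hd, G.bellman_dia T hfb hv hd]
    exact Finset.le_inf' _ _ fun x hx => le_trans (Finset.inf'_le f hx) (h x)
  · rw [G.bellman_circ T hfb hv hc, G.bellman_circ T hfb hv hc]
    exact Finset.sum_le_sum fun x _ => mul_le_mul_of_nonneg_left (h x) (G.prob_nonneg v x)

/-- The Bellman value-iteration sequence. -/
noncomputable def W (G : SGame V) (T : Set V) : ℕ → V → ℝ
  | 0 => fun _ => 0
  | n+1 => G.bellman T (W G T n)

lemma W_nonneg (hfb : ∀ v, {u | G.edge v u}.Finite) : ∀ n v, 0 ≤ W G T n v := by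
  intro n
  induction n with
  | zero => intro v; exact le_refl 0
  | succ n ih => exact G.bellman_nonneg T hfb ih

lemma W_le_one (hfb : ∀ v, {u | G.edge v u}.Finite) : ∀ n v, W G T n v ≤ 1 := by
  intro n
  induction n with
  | zero => intro v; norm_num [W]
  | succ n ih => exact G.bellman_le_one T hfb ih

lemma W_succ_le (hfb : ∀ v, {u | G.edge v u}.Finite) : ∀ n v, W G T n v ≤ W G T (n+1) v := by
  intro n
  induction n with
  | zero => intro v; exact G.bellman_nonneg T hfb (fun _ => le_refl 0) v
  | succ n ih => exact G.bellman_mono T hfb ih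

lemma W_monotone (hfb : ∀ v, {u | G.edge v u}.Finite) (v : V) :
    Monotone fun n => W G T n v :=
  monotone_nat_of_le_succ fun n => G.W_succ_le T hfb n v

/-- The limit of the Bellman iteration. -/
noncomputable def L (G : SGame V) (T : Set V) : V → ℝ := fun v => ⨆ n, W G T n v

lemma W_bddAbove (hfb : ∀ v, {u | G.edge v u}.Finite) (v : V) :
    BddAbove (Set.range fun n => W G T n v) :=
  ⟨1, by rintro y ⟨n, rfl⟩; exact G.W_le_one T hfb n v⟩

lemma W_le_L (hfb : ∀ v, {u | G.edge v u}.Finite) (n : ℕ) (v : V) :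
    W G T n v ≤ G.L T v :=
  le_ciSup (G.W_bddAbove T hfb v) n

lemma L_nonneg (hfb : ∀ v, {u | G.edge v u}.Finite) (v : V) : 0 ≤ G.L T v :=
  le_trans (le_refl 0) (G.W_le_L T hfb 0 v)

lemma L_le_one (hfb : ∀ v, {u | G.edge v u}.Finite) (v : V) : G.L T v ≤ 1 :=
  ciSup_le fun n => G.W_le_one T hfb n v

lemma L_eq_iSup_succ (hfb : ∀ v, {u | G.edge v u}.Finite) (v : V) :
    G.L T v = ⨆ n, W G T (n+1) v := by
  have bdd : BddAbove (Set.range fun n => W G T (n+1) v) :=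
    ⟨1, by rintro y ⟨n, rfl⟩; exact G.W_le_one T hfb (n+1) v⟩
  apply le_antisymm
  · exact ciSup_le fun n => le_trans (G.W_succ_le T hfb n v) (le_ciSup bdd n)
  · exact ciSup_le fun n => G.W_le_L T hfb (n+1) v

lemma bellman_L (hfb : ∀ v, {u | G.edge v u}.Finite) (v : V) :
    G.bellman T (G.L T) v = G.L T v := by
  by_cases hv : v ∈ T
  · rw [G.bellman_target T hv]
    apply le_antisymm
    · exact le_trans (le_refl 1) ((G.bellman_target T (f := W G T 0) hv).symm.le.trans
        (G.W_le_L T hfb 1 v))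
    · exact G.L_le_one T hfb v
  rcases G.cover v with hb | hd | hc
  · rw [G.bellman_box T hfb hv hb, G.L_eq_iSup_succ T hfb v]
    rw [show (G.L T) = fun x => ⨆ n, W G T n x from rfl]
    rw [sup'_iSup _ _ _ (fun x n => G.W_le_one T hfb n x)]
    exact iSup_congr fun n => (G.bellman_box T hfb (f := W G T n) hv hb).symm
  · rw [G.bellman_dia T hfb hv hd, G.L_eq_iSup_succ T hfb v]
    rw [show (G.L T) = fun x => ⨆ n, W G T n x from rfl]
    rw [inf'_iSup _ _ _ (fun x => G.W_monotone T hfb x) (fun x n => G.W_le_one T hfb n x)]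
    exact iSup_congr fun n => (G.bellman_dia T hfb (f := W G T n) hv hd).symm
  · rw [G.bellman_circ T hfb hv hc, G.L_eq_iSup_succ T hfb v]
    have : ∀ u, G.L T u = ⨆ n, W G T n u := fun u => rfl
    simp_rw [this]
    rw [sum_iSup _ _ (fun x => G.prob_nonneg v x) _
      (fun x => G.W_monotone T hfb x) (fun x n => G.W_le_one T hfb n x)]
    exact iSup_congr fun n => (G.bellman_circ T hfb (f := W G T n) hv hc).symm

end Bellman

/-! ### Optimal strategies from the Bellman iteration -/

section Optimal

variable (G : SGame V) (T : Set V)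

lemma step_box {σ : G.Strat G.isBox} {π : G.Strat G.isDiamond} {w : List V} {v u : V}
    (hb : G.isBox v) : G.step σ π w v u = σ.f w v u := if_pos hb

lemma step_dia {σ : G.Strat G.isBox} {π : G.Strat G.isDiamond} {w : List V} {v u : V}
    (hd : G.isDiamond v) : G.step σ π w v u = π.f w v u := by
  unfold SGame.step
  rw [if_neg (fun hb => G.disjBD v ⟨hb, hd⟩), if_pos hd]

lemma step_circ {σ : G.Strat G.isBox} {π : G.Strat G.isDiamond} {w : List V} {v u : V}
    (hc : G.isCirc v) : G.step σ π w v u = G.prob v u := by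
  unfold SGame.step
  rw [if_neg (fun hb => G.disjBC v ⟨hb, hc⟩), if_neg (fun hd => G.disjDC v ⟨hd, hc⟩)]

lemma strat_f_eq_zero {own : V → Prop} (ρ : G.Strat own) (w : List V) {v u : V}
    (hv : own v) (h : ¬ G.edge v u) : ρ.f w v u = 0 := by
  by_contra h'
  exact h (ρ.supp w v u hv h')

lemma strat_sum (hfb : ∀ v, {u | G.edge v u}.Finite) {own : V → Prop} (ρ : G.Strat own)
    (w : List V) {v : V} (hv : own v) : ∑ u ∈ (hfb v).toFinset, ρ.f w v u = 1 := by
  rw [← tsum_eq_sum (L := SummationFilter.unconditional _) (fun u hu => G.strat_f_eq_zero ρ w hv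
    (fun he => hu ((mem_succs G hfb).mpr he)))]
  exact ρ.sum_one w v hv

lemma L_target (hfb : ∀ v, {u | G.edge v u}.Finite) {v : V} (hv : v ∈ T) : G.L T v = 1 := by
  rw [← G.bellman_L T hfb v, G.bellman_target T hv]

/-- An argmin of `L` among the successors of `v`. -/
noncomputable def argminL (hfb : ∀ v, {u | G.edge v u}.Finite) (v : V) : V :=
  (Finset.exists_mem_eq_inf' (G.succs_nonempty hfb v) (G.L T)).choose

lemma argminL_mem (hfb : ∀ v, {u | G.edge v u}.Finite) (v : V) :
    G.argminL T hfb v ∈ (hfb v).toFinset :=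
  (Finset.exists_mem_eq_inf' (G.succs_nonempty hfb v) (G.L T)).choose_spec.1

lemma argminL_spec (hfb : ∀ v, {u | G.edge v u}.Finite) (v : V) :
    ((hfb v).toFinset).inf' (G.succs_nonempty hfb v) (G.L T) = G.L T (G.argminL T hfb v) :=
  (Finset.exists_mem_eq_inf' (G.succs_nonempty hfb v) (G.L T)).choose_spec.2

/-- The memoryless Diamond strategy minimizing `L`. -/
noncomputable def piStar (hfb : ∀ v, {u | G.edge v u}.Finite) : G.Strat G.isDiamond :=
  G.detStrat G.isDiamond (G.argminL T hfb)
    (fun v => (mem_succs G hfb).mp (G.argminL_mem T hfb v))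

lemma piStar_f (hfb : ∀ v, {u | G.edge v u}.Finite) (w : List V) (v u : V) :
    (G.piStar T hfb).f w v u = if u = G.argminL T hfb v then 1 else 0 := rfl

lemma reachN_le_L (hfb : ∀ v, {u | G.edge v u}.Finite) (σ : G.Strat G.isBox) :
    ∀ (n : ℕ) (w : List V) (v : V), G.reachN σ (G.piStar T hfb) T n w v ≤ G.L T v := by
  intro n
  induction n with
  | zero =>
    intro w v
    rw [reachN_zero]
    split
    · exact (G.L_target T hfb ‹_›).ge
    · exact G.L_nonneg T hfb v
  | succ n ih =>
    intro w v
    by_cases hv : v ∈ T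
    · rw [reachN_succ, if_pos hv]
      exact (G.L_target T hfb hv).ge
    rw [G.reachN_sum T hfb _ _ n w hv]
    rcases G.cover v with hb | hd | hc
    · calc ∑ u ∈ (hfb v).toFinset,
            G.step σ (G.piStar T hfb) w v u * G.reachN σ (G.piStar T hfb) T n (w ++ [v]) u
          ≤ ∑ u ∈ (hfb v).toFinset, σ.f w v u * G.L T u := by
            refine Finset.sum_le_sum fun x hx => ?_
            rw [G.step_box hb]
            exact mul_le_mul_of_nonneg_left (ih _ x) (σ.nonneg w v x)
        _ ≤ ∑ u ∈ (hfb v).toFinset, σ.f w v u *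
              (((hfb v).toFinset).sup' (G.succs_nonempty hfb v) (G.L T)) :=
            Finset.sum_le_sum fun x hx =>
              mul_le_mul_of_nonneg_left (Finset.le_sup' (G.L T) hx) (σ.nonneg w v x)
        _ = ((hfb v).toFinset).sup' (G.succs_nonempty hfb v) (G.L T) := by
            rw [← Finset.sum_mul, G.strat_sum hfb σ w hb, one_mul]
        _ = G.L T v := by rw [← G.bellman_box T hfb hv hb, G.bellman_L T hfb v]
    · have ha := G.argminL_mem T hfb v
      calc ∑ u ∈ (hfb v).toFinset,
            G.step σ (G.piStar T hfb) w v u * G.reachN σ (G.piStar T hfb) T n (w ++ [v]) u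
          = G.reachN σ (G.piStar T hfb) T n (w ++ [v]) (G.argminL T hfb v) := by
            rw [Finset.sum_congr rfl (fun x hx => ?_), Finset.sum_ite_eq' _ _
              (fun x => G.reachN σ (G.piStar T hfb) T n (w ++ [v]) x), if_pos ha]
            rw [G.step_dia hd, G.piStar_f T hfb, ite_mul, one_mul, zero_mul]
        _ ≤ G.L T (G.argminL T hfb v) := ih _ _
        _ = G.L T v := by
            rw [← G.argminL_spec T hfb v, ← G.bellman_dia T hfb hv hd, G.bellman_L T hfb v]
    · calc ∑ u ∈ (hfb v).toFinset,
            G.step σ (G.piStar T hfb) w v u * G.reachN σ (G.piStar T hfb) T n (w ++ [v]) u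
          ≤ ∑ u ∈ (hfb v).toFinset, G.prob v u * G.L T u := by
            refine Finset.sum_le_sum fun x hx => ?_
            rw [G.step_circ hc]
            exact mul_le_mul_of_nonneg_left (ih _ x) (G.prob_nonneg v x)
        _ = G.L T v := by rw [← G.bellman_circ T hfb hv hc, G.bellman_L T hfb v]

lemma reachP_le_L (hfb : ∀ v, {u | G.edge v u}.Finite) (σ : G.Strat G.isBox) (v : V) :
    G.reachP σ (G.piStar T hfb) T v ≤ G.L T v :=
  ciSup_le fun n => G.reachN_le_L T hfb σ n [] v

/-- An argmax of `W k` among the successors of `v`. -/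
noncomputable def argmaxW (hfb : ∀ v, {u | G.edge v u}.Finite) (k : ℕ) (v : V) : V :=
  (Finset.exists_mem_eq_sup' (G.succs_nonempty hfb v) (W G T k)).choose

lemma argmaxW_mem (hfb : ∀ v, {u | G.edge v u}.Finite) (k : ℕ) (v : V) :
    G.argmaxW T hfb k v ∈ (hfb v).toFinset :=
  (Finset.exists_mem_eq_sup' (G.succs_nonempty hfb v) (W G T k)).choose_spec.1

lemma argmaxW_spec (hfb : ∀ v, {u | G.edge v u}.Finite) (k : ℕ) (v : V) :
    ((hfb v).toFinset).sup' (G.succs_nonempty hfb v) (W G T k) =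
      W G T k (G.argmaxW T hfb k v) :=
  (Finset.exists_mem_eq_sup' (G.succs_nonempty hfb v) (W G T k)).choose_spec.2

/-- The Box strategy maximizing `W`, counting down the remaining steps. -/
noncomputable def sigmaW (hfb : ∀ v, {u | G.edge v u}.Finite) (n : ℕ) :
    G.Strat G.isBox where
  f := fun w v u => if u = G.argmaxW T hfb (n - w.length - 1) v then 1 else 0
  nonneg := by intro w v u; split <;> norm_num
  supp := by
    intro w v u _ h
    by_cases hu : u = G.argmaxW T hfb (n - w.length - 1) v
    · subst hu; exact (mem_succs G hfb).mp (G.argmaxW_mem T hfb _ v)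
    · simp [hu] at h
  sum_one := by intro w v _; exact tsum_ite_eq _ 1

lemma reachN_ge_W (hfb : ∀ v, {u | G.edge v u}.Finite) (n : ℕ) (π : G.Strat G.isDiamond) :
    ∀ (k : ℕ) (w : List V) (v : V), k + w.length = n →
      W G T k v ≤ G.reachN (G.sigmaW T hfb n) π T k w v := by
  intro k
  induction k with
  | zero => intro w v _; exact G.reachN_nonneg T _ π 0 w v
  | succ k ih =>
    intro w v hk
    by_cases hv : v ∈ T
    · rw [reachN_succ, if_pos hv]
      exact (G.bellman_le_one T hfb (G.W_le_one T hfb k) v)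
    rw [G.reachN_sum T hfb _ _ k w hv]
    have hlen : ∀ u : V, k + (w ++ [v]).length = n := by
      intro u; rw [List.length_append, List.length_singleton]; omega
    rcases G.cover v with hb | hd | hc
    · have hkk : n - w.length - 1 = k := by omega
      have ha := G.argmaxW_mem T hfb k v
      have hstep : ∀ x, (G.sigmaW T hfb n).f w v x =
          if x = G.argmaxW T hfb k v then 1 else 0 := by
        intro x; show (if x = G.argmaxW T hfb (n - w.length - 1) v then (1:ℝ) else 0) = _
        rw [hkk]
      calc W G T (k+1) v = ((hfb v).toFinset).sup' (G.succs_nonempty hfb v) (W G T k) :=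
            G.bellman_box T hfb hv hb
        _ = W G T k (G.argmaxW T hfb k v) := G.argmaxW_spec T hfb k v
        _ ≤ G.reachN (G.sigmaW T hfb n) π T k (w ++ [v]) (G.argmaxW T hfb k v) :=
            ih (w ++ [v]) _ (hlen v)
        _ = ∑ u ∈ (hfb v).toFinset, G.step (G.sigmaW T hfb n) π w v u *
              G.reachN (G.sigmaW T hfb n) π T k (w ++ [v]) u := by
            rw [Finset.sum_congr rfl (fun x hx => ?_), Finset.sum_ite_eq' _ _
              (fun x => G.reachN (G.sigmaW T hfb n) π T k (w ++ [v]) x), if_pos ha]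
            rw [G.step_box hb, hstep, ite_mul, one_mul, zero_mul]
    · calc W G T (k+1) v = ((hfb v).toFinset).inf' (G.succs_nonempty hfb v) (W G T k) :=
            G.bellman_dia T hfb hv hd
        _ = ∑ u ∈ (hfb v).toFinset, π.f w v u *
              (((hfb v).toFinset).inf' (G.succs_nonempty hfb v) (W G T k)) := by
            rw [← Finset.sum_mul, G.strat_sum hfb π w hd, one_mul]
        _ ≤ ∑ u ∈ (hfb v).toFinset, G.step (G.sigmaW T hfb n) π w v u *
              G.reachN (G.sigmaW T hfb n) π T k (w ++ [v]) u := by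
            refine Finset.sum_le_sum fun x hx => ?_
            rw [G.step_dia hd]
            exact mul_le_mul_of_nonneg_left
              (le_trans (Finset.inf'_le _ hx) (ih (w ++ [v]) x (hlen x)))
              (π.nonneg w v x)
    · calc W G T (k+1) v = ∑ u ∈ (hfb v).toFinset, G.prob v u * W G T k u :=
            G.bellman_circ T hfb hv hc
        _ ≤ ∑ u ∈ (hfb v).toFinset, G.step (G.sigmaW T hfb n) π w v u *
              G.reachN (G.sigmaW T hfb n) π T k (w ++ [v]) u := by
            refine Finset.sum_le_sum fun x hx => ?_
            rw [G.step_circ hc]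
            exact mul_le_mul_of_nonneg_left (ih (w ++ [v]) x (hlen x)) (G.prob_nonneg v x)

lemma W_le_val (hfb : ∀ v, {u | G.edge v u}.Finite) (n : ℕ) (v : V) :
    W G T n v ≤ G.val T v := by
  have h1 : ∀ π : G.Strat G.isDiamond, W G T n v ≤ G.reachP (G.sigmaW T hfb n) π T v := by
    intro π
    refine le_trans (G.reachN_ge_W T hfb n π n [] v (by simp)) ?_
    exact G.reachN_le_reachP T hfb _ π n v
  exact le_trans (le_ciInf h1) (le_ciSup (G.iSup_iInf_bddAbove T hfb v) (G.sigmaW T hfb n))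

lemma val_eq_L (hfb : ∀ v, {u | G.edge v u}.Finite) (v : V) : G.val T v = G.L T v := by
  apply le_antisymm
  · exact ciSup_le fun σ => ciInf_le_of_le (G.iInf_reachP_bddBelow T hfb σ v)
      (G.piStar T hfb) (G.reachP_le_L T hfb σ v)
  · exact ciSup_le fun n => G.W_le_val T hfb n v

lemma reachP_piStar_le_val (hfb : ∀ v, {u | G.edge v u}.Finite) (σ : G.Strat G.isBox)
    (v : V) : G.reachP σ (G.piStar T hfb) T v ≤ G.val T v := by
  rw [G.val_eq_L T hfb v]
  exact G.reachP_le_L T hfb σ v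

lemma val_box (hfb : ∀ v, {u | G.edge v u}.Finite) {v : V} (hv : v ∉ T) (hb : G.isBox v) :
    G.val T v = ((hfb v).toFinset).sup' (G.succs_nonempty hfb v) (G.val T) := by
  have : ((hfb v).toFinset).sup' (G.succs_nonempty hfb v) (G.val T) =
      ((hfb v).toFinset).sup' (G.succs_nonempty hfb v) (G.L T) :=
    Finset.sup'_congr _ rfl fun x _ => G.val_eq_L T hfb x
  rw [G.val_eq_L T hfb v, this, ← G.bellman_box T hfb hv hb, G.bellman_L T hfb v]

end Optimal

/-! ### Shifting histories and combining strategies -/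

section Shift

variable {G : SGame V}

/-- Shift a strategy by prepending a fixed vertex to the history. -/
def Strat.shift {own : V → Prop} (ρ : G.Strat own) (a : V) : G.Strat own where
  f := fun w => ρ.f (a :: w)
  nonneg := fun w v u => ρ.nonneg (a :: w) v u
  supp := fun w v u h h' => ρ.supp (a :: w) v u h h'
  sum_one := fun w v h => ρ.sum_one (a :: w) v h

variable (G)

lemma reachN_shift (T : Set V) (σ : G.Strat G.isBox) (π : G.Strat G.isDiamond) (a : V) :
    ∀ (n : ℕ) (w : List V) (v : V),
      G.reachN σ π T n (a :: w) v = G.reachN (σ.shift a) (π.shift a) T n w v := by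
  intro n
  induction n with
  | zero => intro w v; rfl
  | succ n ih =>
    intro w v
    rw [reachN_succ, reachN_succ]
    by_cases hv : v ∈ T
    · simp [hv]
    simp only [if_neg hv]
    refine tsum_congr fun x => ?_
    have h1 : G.reachN σ π T n ((a :: w) ++ [v]) x
        = G.reachN (σ.shift a) (π.shift a) T n (w ++ [v]) x := ih (w ++ [v]) x
    rw [h1]
    rfl

lemma reachN_congr (T : Set V) (σ σ' : G.Strat G.isBox) (π π' : G.Strat G.isDiamond) :
    ∀ (n : ℕ) (w : List V) (v : V),
      (∀ w' v', (w ++ [v]) <+: (w' ++ [v']) →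
        σ.f w' v' = σ'.f w' v' ∧ π.f w' v' = π'.f w' v') →
      G.reachN σ π T n w v = G.reachN σ' π' T n w v := by
  intro n
  induction n with
  | zero => intro w v _; rfl
  | succ n ih =>
    intro w v H
    rw [reachN_succ, reachN_succ]
    by_cases hv : v ∈ T
    · simp [hv]
    simp only [if_neg hv]
    refine tsum_congr fun x => ?_
    have hstep : G.step σ π w v x = G.step σ' π' w v x := by
      obtain ⟨h1, h2⟩ := H w v List.prefix_rfl
      unfold SGame.step
      split_ifs
      · exact congrFun h1 x
      · exact congrFun h2 x
      · rfl
    have hrec : G.reachN σ π T n (w ++ [v]) x = G.reachN σ' π' T n (w ++ [v]) x := by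
      refine ih (w ++ [v]) x fun w' v' hpre => H w' v' ?_
      exact List.IsPrefix.trans (List.prefix_append _ _) hpre
    rw [hstep, hrec]

/-- Combine: play `D` in the first step, then the strategy picked according to
the first visited successor. -/
def combine (D : G.Strat G.isDiamond) (pick : V → G.Strat G.isDiamond) :
    G.Strat G.isDiamond where
  f := fun w v y => match w with
    | [] => D.f [] v y
    | _ :: rest => (pick (rest.headD v)).f rest v y
  nonneg := by
    intro w v y
    cases w with
    | nil => exact D.nonneg [] v y
    | cons a rest => exact (pick (rest.headD v)).nonneg rest v y
  supp := by
    intro w v y hv h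
    cases w with
    | nil => exact D.supp [] v y hv h
    | cons a rest => exact (pick (rest.headD v)).supp rest v y hv h
  sum_one := by
    intro w v hv
    cases w with
    | nil => exact D.sum_one [] v hv
    | cons a rest => exact (pick (rest.headD v)).sum_one rest v hv

lemma combine_f_cons (D : G.Strat G.isDiamond) (pick : V → G.Strat G.isDiamond)
    (a : V) (rest : List V) (v : V) :
    (G.combine D pick).f (a :: rest) v = (pick (rest.headD v)).f rest v := rfl

end Shift

end SGame
/-- In a finitely-branching stochastic game in which every target vertex has
only the self-loop as outgoing edge, every good vertex of player Box has an
optimal outgoing edge leading to a good vertex. -/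
theorem good_box_vertex_has_good_optimal_successor {V : Type*} (G : SGame V)
    (T : Set V) (hfb : ∀ v, {u | G.edge v u}.Finite)
    (hT : ∀ t ∈ T, ∀ u, G.edge t u ↔ u = t)
    (u : V) (hu : G.isBox u)
    (hgood : ∀ π : G.Strat G.isDiamond, ∃ σ : G.Strat G.isBox,
      G.val T u ≤ G.reachP σ π T u) :
    ∃ u', G.edge u u' ∧ G.val T u' = G.val T u ∧
      ∀ π : G.Strat G.isDiamond, ∃ σ : G.Strat G.isBox,
        G.val T u' ≤ G.reachP σ π T u' := by
  classical
  by_cases huT : u ∈ T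
  · exact ⟨u, (hT u huT u).mpr rfl, rfl, hgood⟩
  have hFne : ((hfb u).toFinset).Nonempty := G.succs_nonempty hfb u
  have hbell := G.val_box T hfb huT hu
  by_cases hex : ∃ x ∈ (hfb u).toFinset, G.val T x = G.val T u ∧
      ∀ π : G.Strat G.isDiamond, ∃ σ : G.Strat G.isBox, G.val T x ≤ G.reachP σ π T x
  · obtain ⟨x, hxF, hxval, hxgood⟩ := hex
    exact ⟨x, (SGame.mem_succs G hfb).mp hxF, hxval, hxgood⟩
  exfalso
  push_neg at hex
  -- `hex : ∀ x ∈ succ u, val x = val u → ∃ π, ∀ σ, reachP σ π x < val x`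
  obtain ⟨x0, hx0F, hx0⟩ := Finset.exists_mem_eq_sup' hFne (G.val T)
  have hx0val : G.val T x0 = G.val T u := (hbell.trans hx0).symm
  obtain ⟨π0, hπ0⟩ := hex x0 hx0F hx0val
  have hpos : 0 < G.val T u := by
    calc (0:ℝ) ≤ G.reachP (Classical.arbitrary _) π0 T x0 :=
          G.reachP_nonneg T hfb _ π0 x0
      _ < G.val T x0 := hπ0 _
      _ = G.val T u := hx0val
  -- spoiler strategies for each successor
  have hpick : ∀ y : V, ∃ πy : G.Strat G.isDiamond, y ∈ (hfb u).toFinset →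
      ∀ σ : G.Strat G.isBox, G.reachP σ πy T y < G.val T u := by
    intro y
    by_cases hyF : y ∈ (hfb u).toFinset
    · by_cases hyval : G.val T y = G.val T u
      · obtain ⟨πy, hπy⟩ := hex y hyF hyval
        exact ⟨πy, fun _ σ => (hπy σ).trans_le hyval.le⟩
      · refine ⟨G.piStar T hfb, fun _ σ =>
          lt_of_le_of_lt (G.reachP_piStar_le_val T hfb σ y) ?_⟩
        have hle : G.val T y ≤ G.val T u := by
          rw [hbell]; exact Finset.le_sup' (G.val T) hyF
        exact lt_of_le_of_ne hle hyval
    · exact ⟨Classical.arbitrary _, fun h => absurd h hyF⟩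
  choose pick hpickspec using hpick
  -- the combined spoiler strategy
  set π : G.Strat G.isDiamond := G.combine (G.piStar T hfb) pick with hπ
  obtain ⟨σ, hσ⟩ := hgood π
  set B : ℝ := (((hfb u).toFinset).sup' hFne
      fun y => G.reachP (σ.shift u) (pick y) T y) ⊔ 0 with hB
  have hterm : ∀ y ∈ (hfb u).toFinset, ∀ n : ℕ, G.reachN σ π T n [u] y ≤ B := by
    intro y hy n
    have h1 : G.reachN σ π T n [u] y = G.reachN (σ.shift u) (π.shift u) T n [] y :=
      G.reachN_shift T σ π u n [] y
    have h2 : G.reachN (σ.shift u) (π.shift u) T n [] y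
        = G.reachN (σ.shift u) (pick y) T n [] y := by
      refine G.reachN_congr T _ _ _ _ n [] y fun w' v' hpre => ⟨rfl, ?_⟩
      cases w' with
      | nil =>
        have hv' : v' = y := by
          obtain ⟨t, ht⟩ := hpre
          simp only [List.nil_append, List.cons_append, List.nil_append] at ht
          exact (List.cons.injEq _ _ _ _ ▸ ht).1.symm
        subst hv'
        rfl
      | cons a rest =>
        have ha : a = y := by
          obtain ⟨t, ht⟩ := hpre
          simp only [List.nil_append, List.cons_append] at ht
          exact (List.cons.injEq _ _ _ _ ▸ ht).1.symm
        subst ha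
        rfl
    rw [h1, h2]
    refine le_trans (G.reachN_le_reachP T hfb _ _ n y) ?_
    exact le_trans (Finset.le_sup'
      (fun y => G.reachP (σ.shift u) (pick y) T y) hy) le_sup_left
  have hboundN : ∀ n : ℕ, G.reachN σ π T n [] u ≤ B := by
    intro n
    cases n with
    | zero =>
      rw [G.reachN_zero T σ π [] u, if_neg huT]
      exact le_sup_right
    | succ n =>
      rw [G.reachN_sum T hfb σ π n [] huT]
      calc ∑ x ∈ (hfb u).toFinset, G.step σ π [] u x * G.reachN σ π T n ([] ++ [u]) x
          ≤ ∑ x ∈ (hfb u).toFinset, σ.f [] u x * B := by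
            refine Finset.sum_le_sum fun x hx => ?_
            rw [G.step_box hu]
            exact mul_le_mul_of_nonneg_left (hterm x hx n) (σ.nonneg [] u x)
        _ = B := by rw [← Finset.sum_mul, G.strat_sum hfb σ [] hu, one_mul]
  have hcontr : G.reachP σ π T u ≤ B := ciSup_le hboundN
  have hBlt : B < G.val T u := by
    refine max_lt ?_ hpos
    rw [Finset.sup'_lt_iff]
    intro y hy
    exact hpickspec y hy (σ.shift u)
  exact absurd hσ (not_le.mpr (lt_of_le_of_lt hcontr hBlt))
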